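/- Fix real numbers 0 ≤ λ1 < λ2 < 1. For all Φ1, Φ2, θ ∈ ℝ, all β0, β1 ∈ 𝔻, and every ψ ∈ D(X), one has ‖(E_{Φ1,θ,β0,β1} − E_{Φ2,θ,β0,β1})ψ‖ ≤ 2π·λ2·|Φ1 − Φ2|·‖Xψ‖. -/

import Mathlib

open scoped ENNReal ComplexConjugate Classical
open Filter MeasureTheory

noncomputable section

abbrev l2Z : Type := lp (fun _ : ℤ => ℂ) 2

/-- The standard basis vector `δ_n` of `ℓ²(ℤ)`. -/
def deltaVec (n : ℤ) : l2Z := lp.single 2 n 1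

/-- Membership in the domain of the position operator `X`. -/
def InDomX (ψ : l2Z) : Prop := Memℓp (fun n : ℤ => (n : ℂ) * ψ n) 2

/-- The position operator `X`, defined (with junk value `0` off its domain). -/
def posX (ψ : l2Z) : l2Z :=
  if h : InDomX ψ then (⟨fun n : ℤ => (n : ℂ) * ψ n, h⟩ : l2Z) else 0

/-- `‖X ψ‖²`, computed as an extended real (possibly `+∞`). -/
def XnormSq (ψ : l2Z) : ℝ≥0∞ := ∑' n : ℤ, ENNReal.ofReal ((n : ℝ) ^ 2 * ‖ψ n‖ ^ 2)

/-- `ρ_n = √(1 - |α_n|²)`. -/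
def cmvRho (α : ℤ → ℂ) (n : ℤ) : ℝ := Real.sqrt (1 - ‖α n‖ ^ 2)

/-- The pointwise action of `M = ⊕ₙ Θ(α_{2n+1})` (blocks acting on the pairs
`{2n+1, 2n+2}`): a block `Θ(α_j)` acts on `span{δ_j, δ_{j+1}}` by the matrix
`[[conj α_j, ρ_j], [ρ_j, -α_j]]`. -/
def cmvMApply (α : ℤ → ℂ) (ψ : ℤ → ℂ) : ℤ → ℂ := fun n =>
  if Odd n then conj (α n) * ψ n + (cmvRho α n : ℂ) * ψ (n + 1)
  else (cmvRho α (n - 1) : ℂ) * ψ (n - 1) - α (n - 1) * ψ n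

/-- The pointwise action of `L = ⊕ₙ Θ(α_{2n})` (blocks acting on the pairs `{2n, 2n+1}`). -/
def cmvLApply (α : ℤ → ℂ) (ψ : ℤ → ℂ) : ℤ → ℂ := fun n =>
  if Even n then conj (α n) * ψ n + (cmvRho α n : ℂ) * ψ (n + 1)
  else (cmvRho α (n - 1) : ℂ) * ψ (n - 1) - α (n - 1) * ψ n

/-- `E` is the extended CMV matrix with Verblunsky coefficients `α`: a unitary operator on
`ℓ²(ℤ)` acting pointwise as `E = L M`. -/
def IsECMV (α : ℤ → ℂ) (E : l2Z →L[ℂ] l2Z) : Prop :=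
  E ∈ unitary (l2Z →L[ℂ] l2Z) ∧
    ∀ ψ : l2Z, ∀ n : ℤ, (E ψ) n = cmvLApply α (cmvMApply α (fun m => ψ m)) n

/-- The Verblunsky coefficients of the (locally perturbed) unitary almost-Mathieu operator:
`α₀ = β₀`, `α₁ = β₁`, `α_{2n-1} = λ₂ sin(2π(nΦ+θ))` for `n ≠ 1`, and `α_{2n} = √(1-λ₁²)`
for `n ≠ 0`. -/
def uamoAlpha (lam1 lam2 Phi theta : ℝ) (beta0 beta1 : ℂ) : ℤ → ℂ := fun n =>
  if n = 0 then beta0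
  else if n = 1 then beta1
  else if Odd n then
    ((lam2 * Real.sin (2 * Real.pi * ((((n + 1) / 2 : ℤ) : ℝ) * Phi + theta)) : ℝ) : ℂ)
  else ((Real.sqrt (1 - lam1 ^ 2) : ℝ) : ℂ)

/- ### Auxiliary lemmas -/

def pairEquiv : ℤ × Bool ≃ ℤ where
  toFun p := 2 * p.1 + (if p.2 then 1 else 0)
  invFun n := (n / 2, decide (n % 2 = 1))
  left_inv p := by
    rcases p with ⟨k, b⟩
    cases b <;> simp <;> omega
  right_inv n := by
    simp only []
    rcases Int.even_or_odd n with ⟨k, hk⟩ | ⟨k, hk⟩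
    · have h2 : n % 2 = 0 := by omega
      simp [h2]; omega
    · have h2 : n % 2 = 1 := by omega
      simp [h2]; omega

lemma tsum_pair (f : ℤ → ℝ≥0∞) : ∑' n, f n = ∑' k, (f (2*k) + f (2*k+1)) := by
  rw [← pairEquiv.tsum_eq f]
  have hp : ∑' (c : ℤ × Bool), f (pairEquiv c) = ∑' k, ∑' b, f (pairEquiv (k, b)) :=
    ENNReal.tsum_prod (f := fun k b => f (pairEquiv (k, b)))
  rw [hp]
  congr 1; ext k
  rw [tsum_bool]
  simp [pairEquiv]

lemma tsum_pair' (f : ℤ → ℝ≥0∞) : ∑' n, f n = ∑' k, (f (2*k-1) + f (2*k)) := by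
  have h := (Equiv.addRight (-1 : ℤ)).tsum_eq f
  rw [← h]
  rw [show (fun c : ℤ => f ((Equiv.addRight (-1:ℤ)) c)) = fun n => f (n - 1) from
      funext fun c => by simp [sub_eq_add_neg],
    tsum_pair (fun n => f (n - 1))]
  congr 1; ext k
  congr 2 <;> ring

lemma blockL (a x y : ℂ) (r : ℝ) (hr : r ^ 2 = 1 - ‖a‖ ^ 2) :
    ‖conj a * x + (r : ℂ) * y‖ ^ 2 + ‖(r : ℂ) * x - a * y‖ ^ 2 = ‖x‖ ^ 2 + ‖y‖ ^ 2 := by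
  have ha : ‖a‖ ^ 2 = a.re ^ 2 + a.im ^ 2 := by
    rw [← Complex.normSq_eq_norm_sq, Complex.normSq_apply]; ring
  rw [ha] at hr
  simp only [← Complex.normSq_eq_norm_sq, Complex.normSq_apply,
    Complex.add_re, Complex.add_im, Complex.sub_re, Complex.sub_im, Complex.mul_re,
    Complex.mul_im, Complex.conj_re, Complex.conj_im, Complex.ofReal_re, Complex.ofReal_im]
  nlinarith [sq_nonneg x.re, sq_nonneg x.im]

lemma blockM (g r : ℝ) (x y : ℂ) :
    ‖(g : ℂ) * x + (r : ℂ) * y‖ ^ 2 + ‖(r : ℂ) * x - (g : ℂ) * y‖ ^ 2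
      = (g ^ 2 + r ^ 2) * (‖x‖ ^ 2 + ‖y‖ ^ 2) := by
  simp only [← Complex.normSq_eq_norm_sq, Complex.normSq_apply,
    Complex.add_re, Complex.add_im, Complex.sub_re, Complex.sub_im, Complex.mul_re,
    Complex.mul_im, Complex.ofReal_re, Complex.ofReal_im]
  ring

lemma arcsin_lip (l : ℝ) (hl0 : 0 ≤ l) (hl1 : l < 1) (x y : ℝ) :
    |Real.arcsin (l * Real.sin x) - Real.arcsin (l * Real.sin y)| ≤ l * |x - y| := by
  set f : ℝ → ℝ := fun t => Real.arcsin (l * Real.sin t) with hf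
  have hl2 : l ^ 2 < 1 := by nlinarith
  have hbound : ∀ t : ℝ, (l * Real.sin t) ^ 2 ≤ l ^ 2 := by
    intro t
    have hs : Real.sin t ^ 2 ≤ 1 := Real.sin_sq_le_one t
    have : (l * Real.sin t) ^ 2 = l ^ 2 * Real.sin t ^ 2 := by ring
    nlinarith [sq_nonneg l]
  have hne : ∀ t : ℝ, l * Real.sin t ≠ -1 ∧ l * Real.sin t ≠ 1 := by
    intro t
    constructor <;> intro h <;>
      · have := hbound t
        rw [h] at this
        nlinarith
  have hderiv : ∀ t : ℝ,
      HasDerivAt f ((1 / Real.sqrt (1 - (l * Real.sin t) ^ 2)) * (l * Real.cos t)) t := by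
    intro t
    exact (Real.hasDerivAt_arcsin (hne t).1 (hne t).2).comp t
      ((Real.hasDerivAt_sin t).const_mul l)
  have hb : ∀ t : ℝ, ‖(1 / Real.sqrt (1 - (l * Real.sin t) ^ 2)) * (l * Real.cos t)‖ ≤ l := by
    intro t
    have hpos : 0 < 1 - (l * Real.sin t) ^ 2 := by nlinarith [hbound t]
    have h1 : Real.cos t ^ 2 ≤ 1 - (l * Real.sin t) ^ 2 := by
      have hpyth := Real.sin_sq_add_cos_sq t
      have hfact : 0 ≤ Real.sin t ^ 2 * (1 - l ^ 2) :=
        mul_nonneg (sq_nonneg _) (by nlinarith)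
      nlinarith [mul_pow l (Real.sin t) 2]
    have hsq : |Real.cos t| ≤ Real.sqrt (1 - (l * Real.sin t) ^ 2) := by
      rw [← Real.sqrt_sq_eq_abs]
      exact Real.sqrt_le_sqrt h1
    have hspos : 0 < Real.sqrt (1 - (l * Real.sin t) ^ 2) := Real.sqrt_pos.mpr hpos
    rw [norm_mul, norm_mul, Real.norm_eq_abs, Real.norm_eq_abs, Real.norm_eq_abs,
      abs_of_nonneg hl0,
      abs_of_pos (by positivity : (0:ℝ) < 1 / Real.sqrt (1 - (l * Real.sin t) ^ 2))]
    rw [div_mul_eq_mul_div, one_mul, div_le_iff₀ hspos]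
    exact mul_le_mul_of_nonneg_left hsq hl0
  have key := Convex.norm_image_sub_le_of_norm_hasDerivWithin_le (s := Set.univ) (f := f)
    (f' := fun t => (1 / Real.sqrt (1 - (l * Real.sin t) ^ 2)) * (l * Real.cos t))
    (fun t _ => (hderiv t).hasDerivWithinAt) (fun t _ => hb t) convex_univ
    (Set.mem_univ y) (Set.mem_univ x)
  simpa [Real.norm_eq_abs] using key

lemma chord (l : ℝ) (hl0 : 0 ≤ l) (hl1 : l < 1) (x y : ℝ) :
    (l * Real.sin x - l * Real.sin y) ^ 2
      + (Real.sqrt (1 - (l * Real.sin x) ^ 2) - Real.sqrt (1 - (l * Real.sin y) ^ 2)) ^ 2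
      ≤ l ^ 2 * (x - y) ^ 2 := by
  have hmem : ∀ t : ℝ, -1 ≤ l * Real.sin t ∧ l * Real.sin t ≤ 1 := by
    intro t
    have h1 := Real.neg_one_le_sin t
    have h2 := Real.sin_le_one t
    constructor <;> nlinarith
  set s := Real.arcsin (l * Real.sin x) with hs
  set t := Real.arcsin (l * Real.sin y) with ht
  have hsin_s : Real.sin s = l * Real.sin x := Real.sin_arcsin (hmem x).1 (hmem x).2
  have hsin_t : Real.sin t = l * Real.sin y := Real.sin_arcsin (hmem y).1 (hmem y).2
  have hcos_s : Real.cos s = Real.sqrt (1 - (l * Real.sin x) ^ 2) := Real.cos_arcsin _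
  have hcos_t : Real.cos t = Real.sqrt (1 - (l * Real.sin y) ^ 2) := Real.cos_arcsin _
  rw [← hcos_s, ← hcos_t, ← hsin_s, ← hsin_t]
  have hexp : (Real.sin s - Real.sin t) ^ 2 + (Real.cos s - Real.cos t) ^ 2
      = 2 - 2 * Real.cos (s - t) := by
    rw [Real.cos_sub]
    nlinarith [Real.sin_sq_add_cos_sq s, Real.sin_sq_add_cos_sq t]
  rw [hexp]
  have h1 : 2 - 2 * Real.cos (s - t) ≤ (s - t) ^ 2 := by
    nlinarith [Real.one_sub_sq_div_two_le_cos (x := s - t)]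
  have h2 : |s - t| ≤ l * |x - y| := arcsin_lip l hl0 hl1 x y
  calc 2 - 2 * Real.cos (s - t) ≤ (s - t) ^ 2 := h1
    _ = |s - t| ^ 2 := (sq_abs _).symm
    _ ≤ (l * |x - y|) ^ 2 := pow_le_pow_left₀ (abs_nonneg _) h2 2
    _ = l ^ 2 * (x - y) ^ 2 := by rw [mul_pow, sq_abs]

lemma norm_sq_lp (v : l2Z) : ‖v‖ ^ 2 = ∑' n, ‖v n‖ ^ 2 := by
  have h2 : (0:ℝ) < (2:ℝ≥0∞).toReal := by norm_num
  have h := lp.norm_rpow_eq_tsum h2 v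
  simp only [ENNReal.toReal_ofNat] at h
  rw [show (2:ℝ) = ((2:ℕ):ℝ) by norm_num] at h
  simpa [Real.rpow_natCast] using h

lemma summable_sq_lp (v : l2Z) : Summable fun n => ‖v n‖ ^ 2 := by
  have h2 : (0:ℝ) < (2:ℝ≥0∞).toReal := by norm_num
  have h := (lp.memℓp v).summable h2
  simp only [ENNReal.toReal_ofNat] at h
  rw [show (2:ℝ) = ((2:ℕ):ℝ) by norm_num] at h
  simpa [Real.rpow_natCast] using h


/-- Fix `0 ≤ λ₁ < λ₂ < 1`.  For all `Φ₁, Φ₂, θ ∈ ℝ`, `β₀, β₁ ∈ 𝔻`, and every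
`ψ ∈ D(X)`, one has `‖(E_{Φ₁,θ,β₀,β₁} - E_{Φ₂,θ,β₀,β₁})ψ‖ ≤ 2πλ₂|Φ₁ - Φ₂|·‖Xψ‖`. -/
theorem stmt_11
    (lam1 lam2 : ℝ) (h1 : 0 ≤ lam1) (h12 : lam1 < lam2) (h2 : lam2 < 1)
    (Phi1 Phi2 theta : ℝ) (beta0 beta1 : ℂ) (hb0 : ‖beta0‖ < 1) (hb1 : ‖beta1‖ < 1)
    (E1 E2 : l2Z →L[ℂ] l2Z)
    (hE1 : IsECMV (uamoAlpha lam1 lam2 Phi1 theta beta0 beta1) E1)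
    (hE2 : IsECMV (uamoAlpha lam1 lam2 Phi2 theta beta0 beta1) E2)
    (ψ : l2Z) (hψ : InDomX ψ) :
    ‖E1 ψ - E2 ψ‖ ≤ 2 * Real.pi * lam2 * |Phi1 - Phi2| * ‖posX ψ‖ := by
  set A1 := uamoAlpha lam1 lam2 Phi1 theta beta0 beta1 with hA1
  set A2 := uamoAlpha lam1 lam2 Phi2 theta beta0 beta1 with hA2
  set χ : ℤ → ℂ := fun n => cmvMApply A1 (fun m => ψ m) n - cmvMApply A2 (fun m => ψ m) n with hχ
  set C : ℝ := 2 * Real.pi * lam2 * |Phi1 - Phi2| with hC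
  have hl0 : 0 ≤ lam2 := le_trans h1 h12.le
  have hCnn : 0 ≤ C := by
    have hπ := Real.pi_pos
    rw [hC]
    have : 0 ≤ 2 * Real.pi * lam2 := by positivity
    exact mul_nonneg this (abs_nonneg _)
  -- α agree at even indices
  have heven : ∀ n : ℤ, Even n → A1 n = A2 n := by
    intro n hn
    have hodd : ¬ Odd n := by simpa [Int.not_odd_iff_even] using hn
    by_cases h0 : n = 0
    · simp [hA1, hA2, uamoAlpha, h0]
    · have hne1 : n ≠ 1 := by rintro rfl; exact hodd ⟨0, by ring⟩
      simp [hA1, hA2, uamoAlpha, h0, hne1, hodd]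
  have hrho_even : ∀ n : ℤ, Even n → cmvRho A1 n = cmvRho A2 n := by
    intro n hn; rw [cmvRho, cmvRho, heven n hn]
  have hnorm_even : ∀ n : ℤ, Even n → ‖A1 n‖ ≤ 1 := by
    intro n hn
    have hodd : ¬ Odd n := by simpa [Int.not_odd_iff_even] using hn
    by_cases h0 : n = 0
    · simp only [hA1, uamoAlpha, h0, if_pos rfl]
      exact hb0.le
    · have hne1 : n ≠ 1 := by rintro rfl; exact hodd ⟨0, by ring⟩
      simp only [hA1, uamoAlpha, h0, hne1, hodd, if_false, if_neg h0, if_neg hne1]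
      rw [Complex.norm_real, Real.norm_eq_abs, abs_of_nonneg (Real.sqrt_nonneg _)]
      exact Real.sqrt_le_one.mpr (by nlinarith)
  -- pointwise formula for the difference
  have hv : ∀ n : ℤ, (E1 ψ - E2 ψ : l2Z) n = cmvLApply A1 χ n := by
    intro n
    have hc : (E1 ψ - E2 ψ : l2Z) n = (E1 ψ : l2Z) n - (E2 ψ : l2Z) n := by
      rw [lp.coeFn_sub]; rfl
    rw [hc, hE1.2 ψ n, hE2.2 ψ n]
    have hsame : cmvLApply A2 (cmvMApply A2 (fun m => ψ m)) n
        = cmvLApply A1 (cmvMApply A2 (fun m => ψ m)) n := by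
      unfold cmvLApply
      by_cases hn : Even n
      · rw [if_pos hn, if_pos hn, heven n hn, hrho_even n hn]
      · have hev : Even (n - 1) := by
          rcases Int.even_or_odd n with h | ⟨m, hm⟩
          · exact absurd h hn
          · exact ⟨m, by omega⟩
        rw [if_neg hn, if_neg hn, heven (n-1) hev, hrho_even (n-1) hev]
    rw [hsame]
    unfold cmvLApply
    by_cases hn : Even n
    · rw [if_pos hn, if_pos hn, if_pos hn]
      simp only [hχ]
      ring
    · rw [if_neg hn, if_neg hn, if_neg hn]
      simp only [hχ]
      ring
  -- L-block norm preservation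
  have hLblock : ∀ k : ℤ,
      ‖(E1 ψ - E2 ψ : l2Z) (2*k)‖ ^ 2 + ‖(E1 ψ - E2 ψ : l2Z) (2*k+1)‖ ^ 2
        = ‖χ (2*k)‖ ^ 2 + ‖χ (2*k+1)‖ ^ 2 := by
    intro k
    have he : Even (2*k) := ⟨k, by ring⟩
    have ho : ¬ Even (2*k+1) := by
      rw [Int.even_add_one, not_not]; exact he
    have h1' : (E1 ψ - E2 ψ : l2Z) (2*k)
        = conj (A1 (2*k)) * χ (2*k) + (cmvRho A1 (2*k) : ℂ) * χ (2*k+1) := by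
      rw [hv, cmvLApply, if_pos he]
    have h2' : (E1 ψ - E2 ψ : l2Z) (2*k+1)
        = (cmvRho A1 (2*k) : ℂ) * χ (2*k) - A1 (2*k) * χ (2*k+1) := by
      rw [hv, cmvLApply, if_neg ho, show (2*k+1-1 : ℤ) = 2*k by ring]
    rw [h1', h2']
    apply blockL
    rw [cmvRho, Real.sq_sqrt]
    have := hnorm_even (2*k) he
    nlinarith [norm_nonneg (A1 (2*k))]
  -- structure of χ on M-blocks
  have hodd_idx : ∀ k : ℤ, Odd (2*k - 1) := fun k => ⟨k - 1, by ring⟩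
  have heven_idx : ∀ k : ℤ, ¬ Odd (2*k) := by
    intro k h; rcases h with ⟨m, hm⟩; omega
  have hχodd : ∀ k : ℤ, χ (2*k-1)
      = conj (A1 (2*k-1) - A2 (2*k-1)) * ψ (2*k-1)
        + ((cmvRho A1 (2*k-1) - cmvRho A2 (2*k-1) : ℝ) : ℂ) * ψ (2*k) := by
    intro k
    simp only [hχ, cmvMApply, if_pos (hodd_idx k), show (2*k-1+1 : ℤ) = 2*k by ring]
    push_cast
    ring_nf
    rw [map_sub]
    ring
  have hχeven : ∀ k : ℤ, χ (2*k)
      = ((cmvRho A1 (2*k-1) - cmvRho A2 (2*k-1) : ℝ) : ℂ) * ψ (2*k-1)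
        - (A1 (2*k-1) - A2 (2*k-1)) * ψ (2*k) := by
    intro k
    simp only [hχ, cmvMApply, if_neg (heven_idx k)]
    push_cast
    ring
  -- the odd coefficients are real with the chord bound
  have hMcoeff : ∀ k : ℤ, ∃ g : ℝ, A1 (2*k-1) - A2 (2*k-1) = (g : ℂ) ∧
      g ^ 2 + (cmvRho A1 (2*k-1) - cmvRho A2 (2*k-1)) ^ 2 ≤ C ^ 2 * (k : ℝ) ^ 2 := by
    intro k
    by_cases hk : k = 1
    · subst hk
      have hA : A1 (2*1-1) = A2 (2*1-1) := by norm_num [hA1, hA2, uamoAlpha]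
      refine ⟨0, by rw [hA, sub_self]; norm_num, ?_⟩
      rw [cmvRho, cmvRho, hA, sub_self]
      push_cast
      nlinarith [sq_nonneg C]
    · have hne0 : (2*k-1 : ℤ) ≠ 0 := by omega
      have hne1 : (2*k-1 : ℤ) ≠ 1 := by omega
      have hdiv : ((2*k-1+1 : ℤ)) / 2 = k := by omega
      have hval : ∀ Phi : ℝ, uamoAlpha lam1 lam2 Phi theta beta0 beta1 (2*k-1)
          = ((lam2 * Real.sin (2 * Real.pi * ((k : ℝ) * Phi + theta)) : ℝ) : ℂ) := by
        intro Phi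
        simp only [uamoAlpha, if_neg hne0, if_neg hne1, if_pos (hodd_idx k), hdiv]
      set X1 := 2 * Real.pi * ((k : ℝ) * Phi1 + theta) with hX1
      set X2 := 2 * Real.pi * ((k : ℝ) * Phi2 + theta) with hX2
      refine ⟨lam2 * Real.sin X1 - lam2 * Real.sin X2, ?_, ?_⟩
      · rw [hA1, hA2, hval Phi1, hval Phi2, ← Complex.ofReal_sub]
      · have hr : ∀ Phi : ℝ, cmvRho (uamoAlpha lam1 lam2 Phi theta beta0 beta1) (2*k-1)
            = Real.sqrt (1 - (lam2 * Real.sin (2 * Real.pi * ((k : ℝ) * Phi + theta))) ^ 2) := by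
          intro Phi
          rw [cmvRho, hval Phi, Complex.norm_real, Real.norm_eq_abs, sq_abs]
        rw [hA1, hA2, hr Phi1, hr Phi2]
        have hch := chord lam2 hl0 h2 X1 X2
        have hXd : X1 - X2 = 2 * Real.pi * (k : ℝ) * (Phi1 - Phi2) := by
          rw [hX1, hX2]; ring
        have hCsq : C ^ 2 * (k : ℝ) ^ 2 = lam2 ^ 2 * (X1 - X2) ^ 2 := by
          rw [hXd, hC]
          rw [show (2 * Real.pi * lam2 * |Phi1 - Phi2|) ^ 2
              = (2*Real.pi)^2 * lam2^2 * |Phi1 - Phi2| ^ 2 by ring, sq_abs]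
          ring
        rw [hCsq]
        exact hch
  -- M-block bound
  have hMbound : ∀ k : ℤ, ‖χ (2*k-1)‖ ^ 2 + ‖χ (2*k)‖ ^ 2
      ≤ C ^ 2 * (((2*k-1 : ℤ) : ℝ) ^ 2 * ‖ψ (2*k-1)‖ ^ 2
          + ((2*k : ℤ) : ℝ) ^ 2 * ‖ψ (2*k)‖ ^ 2) := by
    intro k
    obtain ⟨g, hg, hbd⟩ := hMcoeff k
    set r : ℝ := cmvRho A1 (2*k-1) - cmvRho A2 (2*k-1) with hrdef
    have hident : ‖χ (2*k-1)‖ ^ 2 + ‖χ (2*k)‖ ^ 2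
        = (g ^ 2 + r ^ 2) * (‖ψ (2*k-1)‖ ^ 2 + ‖ψ (2*k)‖ ^ 2) := by
      rw [hχodd k, hχeven k, hg, Complex.conj_ofReal]
      exact blockM g r _ _
    rw [hident]
    have hk1 : (k : ℝ) ^ 2 ≤ ((2*k-1 : ℤ) : ℝ) ^ 2 := by
      have : (k ^ 2 : ℤ) ≤ (2*k-1) ^ 2 := by
        rcases le_or_gt k 0 with h | h <;> nlinarith
      exact_mod_cast this
    have hk2 : (k : ℝ) ^ 2 ≤ ((2*k : ℤ) : ℝ) ^ 2 := by
      have : (k ^ 2 : ℤ) ≤ (2*k) ^ 2 := by nlinarith [sq_nonneg k]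
      exact_mod_cast this
    calc (g ^ 2 + r ^ 2) * (‖ψ (2*k-1)‖ ^ 2 + ‖ψ (2*k)‖ ^ 2)
        ≤ (C ^ 2 * (k:ℝ) ^ 2) * (‖ψ (2*k-1)‖ ^ 2 + ‖ψ (2*k)‖ ^ 2) := by
          apply mul_le_mul_of_nonneg_right hbd
          positivity
      _ ≤ C ^ 2 * (((2*k-1 : ℤ) : ℝ) ^ 2 * ‖ψ (2*k-1)‖ ^ 2
            + ((2*k : ℤ) : ℝ) ^ 2 * ‖ψ (2*k)‖ ^ 2) := by
          have hn1 : (0:ℝ) ≤ ‖ψ (2*k-1)‖ ^ 2 := sq_nonneg _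
          have hn2 : (0:ℝ) ≤ ‖ψ (2*k)‖ ^ 2 := sq_nonneg _
          have e1 := mul_le_mul_of_nonneg_left
            (mul_le_mul_of_nonneg_right hk1 hn1) (sq_nonneg C)
          have e2 := mul_le_mul_of_nonneg_left
            (mul_le_mul_of_nonneg_right hk2 hn2) (sq_nonneg C)
          nlinarith [e1, e2]
  -- now the ENNReal chain
  set v : l2Z := E1 ψ - E2 ψ with hvdef
  set F : ℤ → ℝ≥0∞ := fun n => ENNReal.ofReal (‖v n‖ ^ 2) with hF
  set G : ℤ → ℝ≥0∞ := fun n => ENNReal.ofReal (‖χ n‖ ^ 2) with hG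
  set H : ℤ → ℝ≥0∞ := fun n => ENNReal.ofReal ((n : ℝ) ^ 2 * ‖ψ n‖ ^ 2) with hH
  have step1 : ∑' n, F n = ∑' n, G n := by
    rw [tsum_pair F, tsum_pair G]
    congr 1; ext k
    rw [hF, hG]
    simp only []
    rw [← ENNReal.ofReal_add (sq_nonneg _) (sq_nonneg _),
        ← ENNReal.ofReal_add (sq_nonneg _) (sq_nonneg _), hLblock k]
  have step2 : ∑' n, G n ≤ ENNReal.ofReal (C ^ 2) * ∑' n, H n := by
    rw [tsum_pair' G, tsum_pair' H, ← ENNReal.tsum_mul_left]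
    apply ENNReal.tsum_le_tsum
    intro k
    rw [hG, hH]
    simp only []
    rw [← ENNReal.ofReal_add (sq_nonneg _) (sq_nonneg _),
        ← ENNReal.ofReal_add (by positivity) (by positivity),
        ← ENNReal.ofReal_mul (sq_nonneg _)]
    apply ENNReal.ofReal_le_ofReal
    have := hMbound k
    push_cast at this ⊢
    linarith
  -- identify the two sides
  have hvsum : ∑' n, F n = ENNReal.ofReal (‖v‖ ^ 2) := by
    rw [norm_sq_lp v, ENNReal.ofReal_tsum_of_nonneg (fun n => sq_nonneg _) (summable_sq_lp v)]
  have hposX : posX ψ = (⟨fun n : ℤ => (n : ℂ) * ψ n, hψ⟩ : l2Z) := dif_pos hψ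
  have hXcoord : ∀ n : ℤ, (posX ψ : l2Z) n = (n : ℂ) * ψ n := by
    intro n; rw [hposX]
  have hXsum : ∑' n, H n = ENNReal.ofReal (‖posX ψ‖ ^ 2) := by
    rw [norm_sq_lp (posX ψ),
      ENNReal.ofReal_tsum_of_nonneg (fun n => sq_nonneg _) (summable_sq_lp (posX ψ))]
    congr 1; ext n
    rw [hH]
    simp only []
    congr 1
    rw [hXcoord n, norm_mul, mul_pow]
    congr 1
    rw [Complex.norm_intCast]
    rw [sq_abs]
  have main : ENNReal.ofReal (‖v‖ ^ 2) ≤ ENNReal.ofReal (C ^ 2 * ‖posX ψ‖ ^ 2) := by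
    rw [← hvsum, ENNReal.ofReal_mul (by positivity), ← hXsum]
    exact step1.le.trans step2
  have hreal : ‖v‖ ^ 2 ≤ C ^ 2 * ‖posX ψ‖ ^ 2 := by
    rwa [ENNReal.ofReal_le_ofReal_iff (by positivity)] at main
  have hfin : ‖v‖ ^ 2 ≤ (C * ‖posX ψ‖) ^ 2 := by rw [mul_pow]; exact hreal
  have := Real.sqrt_le_sqrt hfin
  rwa [Real.sqrt_sq (norm_nonneg v), Real.sqrt_sq (by positivity)] at this



end
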